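/- Let G be a countable discrete group, K a topological field, and V a pro-finite-dimensional K-vector space with a continuous K-linear G-action. Then B^p(G,V) is closed in Z^p(G,V) for all p ≥ 0. -/

import Mathlib

open Topology

set_option linter.unusedSectionVars false
set_option synthInstance.maxHeartbeats 1000000
set_option maxHeartbeats 1000000

/-- The inverse limit of an inverse sequence of `K`-modules along the connecting
maps `q i : V (i+1) → V i`, realized as the submodule of consistent sequences in
the product `∀ i, V i`. -/
def invLim (K : Type) [Field K] (V : ℕ → Type) [∀ i, AddCommGroup (V i)]
    [∀ i, Module K (V i)] (q : ∀ i, V (i + 1) →ₗ[K] V i) : Submodule K (∀ i, V i) where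
  carrier := {v | ∀ i, q i (v (i + 1)) = v i}
  add_mem' := by intro a b ha hb i; simp [ha i, hb i]
  zero_mem' := by intro i; simp
  smul_mem' := by intro c a ha i; simp [ha i]

/-- The canonical projection `Q i` from the inverse limit to the `i`-th stage. -/
def invLimProj (K : Type) [Field K] (V : ℕ → Type) [∀ i, AddCommGroup (V i)]
    [∀ i, Module K (V i)] (q : ∀ i, V (i + 1) →ₗ[K] V i) (i : ℕ) :
    ↥(invLim K V q) →ₗ[K] V i :=
  (LinearMap.proj i).comp (invLim K V q).subtype

/-- The composite connecting map `q^j_i : V j → V i` for `i ≤ j`. -/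
def qIter (K : Type) [Field K] (V : ℕ → Type) [∀ i, AddCommGroup (V i)]
    [∀ i, Module K (V i)] (q : ∀ i, V (i + 1) →ₗ[K] V i) (i : ℕ) :
    ∀ j, i ≤ j → (V j →ₗ[K] V i)
  | 0, h => by
    have hi : i = 0 := Nat.le_zero.mp h
    subst hi; exact LinearMap.id
  | j + 1, h =>
    if heq : i = j + 1 then by subst heq; exact LinearMap.id
    else (qIter K V q i j (by omega)).comp (q j)

/-- The inhomogeneous bar-resolution coboundary operator
`d : C^p(G,V) → C^{p+1}(G,V)`:
`d f (g_1,…,g_{p+1}) = π(g_1) f(g_2,…,g_{p+1})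
  + ∑_{i=1}^{p} (-1)^i f(g_1,…,g_i g_{i+1},…,g_{p+1})
  + (-1)^{p+1} f(g_1,…,g_p)`. -/
def cochainD {K G V : Type} [Field K] [Group G] [AddCommGroup V] [Module K V]
    (π : Representation K G V) (p : ℕ) (f : (Fin p → G) → V) :
    (Fin (p + 1) → G) → V :=
  fun g =>
    π (g 0) (f (fun i => g i.succ)) +
      (∑ i : Fin p, ((-1 : ℤ) ^ ((i : ℕ) + 1)) •
        f (fun j => if (j : ℕ) < (i : ℕ) then g j.castSucc
          else if (j : ℕ) = (i : ℕ) then g i.castSucc * g i.succ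
          else g j.succ)) +
      ((-1 : ℤ) ^ (p + 1)) • f (fun j => g j.castSucc)

/-! ### Auxiliary results -/

section Helpers
variable {K : Type} [Field K] [TopologicalSpace K] [IsTopologicalRing K] [T2Space K]

/-- Any linear map from `(Fin m → K) × K` to a topological module is continuous. -/
theorem linearMap_prod_continuous {m : ℕ} {M : Type*} [AddCommGroup M] [Module K M]
    [TopologicalSpace M] [ContinuousAdd M] [ContinuousSMul K M]
    (F : ((Fin m → K) × K) →ₗ[K] M) : Continuous F := by
  have h1 : Continuous (F.comp (LinearMap.inl K (Fin m → K) K)) :=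
    LinearMap.continuous_on_pi _
  have key : ∀ p : (Fin m → K) × K, F p = F.comp (LinearMap.inl K (Fin m → K) K) p.1
      + p.2 • F (0, 1) := by
    intro p
    rw [LinearMap.comp_apply, LinearMap.inl_apply, ← F.map_smul, ← F.map_add]
    congr 1
    simp [Prod.ext_iff]
  have : Continuous fun p : (Fin m → K) × K =>
      F.comp (LinearMap.inl K (Fin m → K) K) p.1 + p.2 • F (0, 1) :=
    (h1.comp continuous_fst).add (continuous_snd.smul continuous_const)
  simpa only [← key] using this

/-- Every submodule of `(Fin m → K) × K` over a T2 topological field is closed. -/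
theorem submodule_closed' {m : ℕ} (W : Submodule K ((Fin m → K) × K)) :
    IsClosed (W : Set ((Fin m → K) × K)) := by
  obtain ⟨W', h⟩ := W.exists_isCompl
  set F := W'.subtype.comp (W'.linearProjOfIsCompl W h.symm) with hF
  have hker : ∀ x, x ∈ W ↔ F x = 0 := by
    intro x
    simp only [hF, LinearMap.comp_apply, Submodule.coe_subtype,
      ZeroMemClass.coe_eq_zero]
    exact (Submodule.linearProjOfIsCompl_apply_eq_zero_iff h.symm).symm
  have : (W : Set ((Fin m → K) × K)) = F ⁻¹' {0} := by ext x; simp [hker x]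
  rw [this]
  exact (isClosed_singleton).preimage (linearMap_prod_continuous F)

/-- Every submodule of a finite power of a T2 topological field is closed. -/
theorem submodule_closed {m : ℕ} (W : Submodule K (Fin m → K)) :
    IsClosed (W : Set (Fin m → K)) := by
  obtain ⟨W', h⟩ := W.exists_isCompl
  set F : (Fin m → K) →ₗ[K] (Fin m → K) :=
    W'.subtype.comp (W'.linearProjOfIsCompl W h.symm) with hF
  have hker : ∀ x, x ∈ W ↔ F x = 0 := by
    intro x
    simp only [hF, LinearMap.comp_apply, Submodule.coe_subtype,
      ZeroMemClass.coe_eq_zero]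
    exact (Submodule.linearProjOfIsCompl_apply_eq_zero_iff h.symm).symm
  have : (W : Set (Fin m → K)) = F ⁻¹' {0} := by ext x; simp [hker x]
  rw [this]
  exact (isClosed_singleton).preimage F.continuous_on_pi

/-- An antitone sequence of naturals is eventually constant. -/
theorem antitone_eventually_const (d : ℕ → ℕ) (hd : ∀ a b, a ≤ b → d b ≤ d a) :
    ∃ k0, ∀ k, k0 ≤ k → d k = d k0 := by
  have hne : (Set.range d).Nonempty := ⟨d 0, 0, rfl⟩
  obtain ⟨k0, hk0⟩ := Nat.sInf_mem hne
  refine ⟨k0, fun k hk => le_antisymm (hd _ _ hk) ?_⟩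
  rw [hk0]
  exact Nat.sInf_le ⟨k, rfl⟩

/-- Choice of a compatible chain through a sequence of sets linked by maps. -/
theorem exists_chain {α : ℕ → Type*} (E : ∀ m, Set (α m)) (Tf : ∀ m, α (m+1) → α m)
    (h0 : (E 0).Nonempty)
    (hstep : ∀ m, ∀ v ∈ E m, ∃ v', v' ∈ E (m+1) ∧ Tf m v' = v) :
    ∃ z : ∀ m, α m, (∀ m, z m ∈ E m) ∧ ∀ m, Tf m (z (m+1)) = z m := by
  let z' : ∀ m, {v : α m // v ∈ E m} := fun m => Nat.rec
    ⟨h0.choose, h0.choose_spec⟩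
    (fun m w => ⟨(hstep m w.1 w.2).choose, (hstep m w.1 w.2).choose_spec.1⟩) m
  refine ⟨fun m => (z' m).1, fun m => (z' m).2, fun m => ?_⟩
  exact (hstep m (z' m).1 (z' m).2).choose_spec.2

/-- A coordinate of a continuous linear map out of a submodule of `K^ℕ` depends only
on finitely many coordinates. -/
theorem coord_finite_dep (X : Submodule K (ℕ → K))
    (f : ↥X →ₗ[K] (ℕ → K)) (hf : Continuous f) (j : ℕ) :
    ∃ N : ℕ, ∀ x : ↥X, (∀ i, i < N → (x : ℕ → K) i = 0) → f x j = 0 := by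
  have hcont : Continuous fun x : ↥X => f x j := (continuous_apply j).comp hf
  have h1 : {c : K | c ≠ 1} ∈ nhds ((fun x : ↥X => f x j) 0) := by
    have : (fun x : ↥X => f x j) 0 = 0 := by simp
    rw [this]
    exact IsOpen.mem_nhds isOpen_ne zero_ne_one
  have h2 : (fun x : ↥X => f x j) ⁻¹' {c : K | c ≠ 1} ∈ nhds (0 : ↥X) :=
    hcont.continuousAt.preimage_mem_nhds h1
  rw [nhds_subtype_eq_comap] at h2
  obtain ⟨s, hs, hsub⟩ := Filter.mem_comap.mp h2
  have hs' : s ∈ nhds ((0 : ↥X) : ℕ → K) := hs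
  rw [nhds_pi] at hs'
  obtain ⟨I, hIfin, u, hu, hIsub⟩ := Filter.mem_pi.mp hs'
  obtain ⟨N0, hN0⟩ := hIfin.bddAbove
  refine ⟨N0 + 1, fun x hx => ?_⟩
  have key : ∀ c : K, c * f x j ≠ 1 := by
    intro c
    have hmem : ((c • x : ↥X) : ℕ → K) ∈ Set.pi I u := by
      intro i hi
      have : ((c • x : ↥X) : ℕ → K) i = 0 := by
        have hx0 : (x : ℕ → K) i = 0 := hx i (Nat.lt_succ_of_le (hN0 hi))
        simp [hx0]
      rw [this]
      have := hu i
      simpa using mem_of_mem_nhds this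
    have : (c • x) ∈ (fun x : ↥X => f x j) ⁻¹' {c : K | c ≠ 1} := hsub (hIsub hmem)
    simpa [map_smul] using this
  by_contra h
  exact key (f x j)⁻¹ (inv_mul_cancel₀ h)

/-- Core theorem: a continuous linear map from a closed submodule of `K^ℕ` to `K^ℕ`
has closed range. -/
theorem core_closed_range (X : Submodule K (ℕ → K)) (hX : IsClosed (X : Set (ℕ → K)))
    (f : ↥X →ₗ[K] (ℕ → K)) (hf : Continuous f) : IsClosed (Set.range ⇑f) := by
  choose N hN using coord_finite_dep X f hf
  have hdep : ∀ j (x z : ↥X), (∀ i, i < N j → (x : ℕ → K) i = (z : ℕ → K) i) →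
      f x j = f z j := by
    intro j x z h
    have h0 : f (x - z) j = 0 := by
      refine hN j (x - z) fun i hi => ?_
      have : ((x - z : ↥X) : ℕ → K) i = (x : ℕ → K) i - (z : ℕ → K) i := rfl
      rw [this, h i hi, sub_self]
    have : f x j - f z j = 0 := by
      rw [← h0, map_sub]; rfl
    exact sub_eq_zero.mp this
  rw [← closure_subset_iff_isClosed]
  intro y hy
  -- homogenized solution submodules
  let S : ℕ → Submodule K (↥X × K) := fun k =>
    { carrier := {p | ∀ j, j < k → f p.1 j = p.2 * y j}
      add_mem' := by
        intro a b ha hb j hj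
        have : f (a.1 + b.1) j = f a.1 j + f b.1 j := by rw [map_add]; rfl
        simp only [Prod.fst_add, Prod.snd_add, this, ha j hj, hb j hj, add_mul]
      zero_mem' := by intro j hj; simp
      smul_mem' := by
        intro c a ha j hj
        have : f (c • a.1) j = c * f a.1 j := by rw [map_smul]; rfl
        simp only [Prod.smul_fst, Prod.smul_snd, this, ha j hj, smul_eq_mul, mul_assoc] }
  have hSmem : ∀ k (p : ↥X × K), p ∈ S k ↔ ∀ j, j < k → f p.1 j = p.2 * y j :=
    fun k p => Iff.rfl
  -- restriction maps
  let R : ∀ m : ℕ, (↥X × K) →ₗ[K] ((Fin m → K) × K) := fun m =>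
    { toFun := fun p => (fun i => (p.1 : ℕ → K) i, p.2)
      map_add' := by intro a b; refine Prod.ext ?_ rfl; rfl
      map_smul' := by intro c a; refine Prod.ext ?_ rfl; rfl }
  let T : ∀ m : ℕ, ((Fin (m+1) → K) × K) →ₗ[K] ((Fin m → K) × K) := fun m =>
    { toFun := fun p => (fun i => p.1 i.castSucc, p.2)
      map_add' := by intro a b; rfl
      map_smul' := by intro c a; rfl }
  have hTR : ∀ m, (T m).comp (R (m+1)) = R m := by
    intro m; apply LinearMap.ext; intro p; rfl
  let E : ∀ m : ℕ, ℕ → Submodule K ((Fin m → K) × K) := fun m k => (S k).map (R m)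
  have hSanti : ∀ k k', k ≤ k' → S k' ≤ S k := by
    intro k k' hk p hp j hj
    exact hp j (lt_of_lt_of_le hj hk)
  have hEanti : ∀ m k k', k ≤ k' → E m k' ≤ E m k :=
    fun m k k' hk => Submodule.map_mono (hSanti k k' hk)
  -- stabilization
  have hstab : ∀ m, ∃ k0, ∀ k, k0 ≤ k → E m k = E m k0 := by
    intro m
    haveI hfd : FiniteDimensional K ((Fin m → K) × K) := inferInstance
    obtain ⟨k0, hk0⟩ := antitone_eventually_const
      (fun k => Module.finrank K (E m k))
      (fun a b hab => Submodule.finrank_mono (hEanti m a b hab))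
    refine ⟨k0, fun k hk => ?_⟩
    exact Submodule.eq_of_le_of_finrank_le (hEanti m k0 k hk) (le_of_eq (hk0 k hk).symm)
  choose κ hκ using hstab
  have hTE : ∀ m k, (E (m+1) k).map (T m) = E m k := by
    intro m k
    show ((S k).map (R (m+1))).map (T m) = (S k).map (R m)
    rw [← Submodule.map_comp, hTR]
  have hsur : ∀ m, (E (m+1) (κ (m+1))).map (T m) = E m (κ m) := by
    intro m
    have h1 : E (m+1) (max (κ m) (κ (m+1))) = E (m+1) (κ (m+1)) :=
      hκ (m+1) _ (le_max_right _ _)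
    have h2 : E m (max (κ m) (κ (m+1))) = E m (κ m) :=
      hκ m _ (le_max_left _ _)
    rw [← h1, hTE, h2]
  -- approximate solutions
  have claim1 : ∀ k, ∃ x : ↥X, ∀ j, j < k → f x j = y j := by
    intro k
    let Φ : ↥X →ₗ[K] (Fin k → K) := LinearMap.pi fun j : Fin k => (LinearMap.proj (j : ℕ)).comp f
    have hW := submodule_closed (LinearMap.range Φ)
    have hψ : Continuous fun w : ℕ → K => (fun j : Fin k => w j) :=
      continuous_pi fun j => continuous_apply _
    have hyW : (fun j : Fin k => y j) ∈ LinearMap.range Φ := by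
      have h1 : (fun j : Fin k => y j) ∈
          closure ((fun w : ℕ → K => fun j : Fin k => w j) '' Set.range ⇑f) :=
        image_closure_subset_closure_image hψ ⟨y, hy, rfl⟩
      have h2 : (fun w : ℕ → K => fun j : Fin k => w j) '' Set.range ⇑f
          = (LinearMap.range Φ : Set (Fin k → K)) := by
        rw [← Set.range_comp]
        rfl
      rw [h2] at h1
      rwa [hW.closure_eq] at h1
    obtain ⟨x, hx⟩ := hyW
    refine ⟨x, fun j hj => ?_⟩
    have := congrFun hx ⟨j, hj⟩
    exact this
  -- elements with second coordinate 1
  have hone : ∀ m, ∃ v, v ∈ E m (κ m) ∧ v.2 = 1 := by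
    intro m
    obtain ⟨x, hx⟩ := claim1 (κ m)
    refine ⟨R m (x, 1), ⟨(x, 1), ?_, rfl⟩, rfl⟩
    intro j hj
    rw [hx j hj, one_mul]
  -- build the compatible chain
  obtain ⟨z, hzmem, hzT⟩ := exists_chain
    (fun m => {v | v ∈ E m (κ m) ∧ v.2 = 1}) (fun m => T m)
    (hone 0)
    (by
      intro m v hv
      have : v ∈ (E (m+1) (κ (m+1))).map (T m) := by rw [hsur m]; exact hv.1
      obtain ⟨v', hv', hTv⟩ := this
      refine ⟨v', ⟨hv', ?_⟩, hTv⟩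
      have : (T m v').2 = v'.2 := rfl
      rw [← hv.2, ← hTv, this])
  have hzE : ∀ m, z m ∈ E m (κ m) := fun m => (hzmem m).1
  have hz1 : ∀ m, (z m).2 = 1 := fun m => (hzmem m).2
  -- the limit point
  let x' : ℕ → K := fun i => (z (i+1)).1 ⟨i, Nat.lt_succ_self i⟩
  have haux : ∀ d i, (z (i+1+d)).1 ⟨i, by omega⟩ = x' i := by
    intro d
    induction d with
    | zero => intro i; rfl
    | succ d ih =>
      intro i
      have e1 : (z (i+1+(d+1))).1 ⟨i, by omega⟩
          = (T (i+1+d) (z (i+1+d+1))).1 ⟨i, by omega⟩ := rfl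
      rw [e1, hzT (i+1+d)]
      exact ih i
  have hagree : ∀ m i (h : i < m), (z m).1 ⟨i, h⟩ = x' i := by
    intro m i h
    obtain ⟨d, rfl⟩ : ∃ d, m = i+1+d := ⟨m - (i+1), by omega⟩
    exact haux d i
  have hXmem : x' ∈ X := by
    have hcl : x' ∈ closure (X : Set (ℕ → K)) := by
      rw [mem_closure_iff_nhds]
      intro t ht
      rw [nhds_pi] at ht
      obtain ⟨I, hIfin, u, hu, hIsub⟩ := Filter.mem_pi.mp ht
      obtain ⟨N0, hN0⟩ := hIfin.bddAbove
      obtain ⟨p, hp, hRp⟩ := Submodule.mem_map.mp (hzE (N0+1))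
      refine ⟨(p.1 : ℕ → K), hIsub ?_, p.1.2⟩
      intro i hi
      have hiN : i < N0 + 1 := Nat.lt_succ_of_le (hN0 hi)
      have h1 : (p.1 : ℕ → K) i = (z (N0+1)).1 ⟨i, hiN⟩ := by
        rw [← hRp]; rfl
      rw [h1, hagree (N0+1) i hiN]
      exact mem_of_mem_nhds (hu i)
    rwa [hX.closure_eq] at hcl
  refine ⟨⟨x', hXmem⟩, ?_⟩
  funext j
  have hEm : E (N j) (max (κ (N j)) (j+1)) = E (N j) (κ (N j)) := hκ (N j) _ (le_max_left _ _)
  have hz' : z (N j) ∈ E (N j) (max (κ (N j)) (j+1)) := by rw [hEm]; exact hzE (N j)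
  obtain ⟨p, hp, hRp⟩ := Submodule.mem_map.mp hz'
  have hp2 : p.2 = 1 := by
    have h2 : (R (N j) p).2 = p.2 := rfl
    rw [← h2, hRp]; exact hz1 (N j)
  have hfp : f p.1 j = y j := by
    have := hp j (lt_of_lt_of_le (Nat.lt_succ_self j) (le_max_right _ _))
    rwa [hp2, one_mul] at this
  have hag : ∀ i, i < N j → ((⟨x', hXmem⟩ : ↥X) : ℕ → K) i = (p.1 : ℕ → K) i := by
    intro i hi
    have h1 : (p.1 : ℕ → K) i = (z (N j)).1 ⟨i, hi⟩ := by rw [← hRp]; rfl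
    rw [h1, hagree (N j) i hi]
  exact (hdep j ⟨x', hXmem⟩ p.1 hag).trans hfp

end Helpers

section Pack
variable (K : Type) [Field K] [TopologicalSpace K] [IsTopologicalRing K] [T2Space K]
  (n : ℕ → ℕ) (q : ∀ i, (Fin (n (i + 1)) → K) →ₗ[K] (Fin (n i) → K))
  (A : Type) [Encodable (A × Σ i, Fin (n i))]

/-- Packing a cochain space into a single countable product of copies of `K`. -/
noncomputable def packFn :
    (A → ↥(invLim K (fun i => Fin (n i) → K) q)) →ₗ[K] (ℕ → K) where
  toFun c m := (Encodable.decode (α := A × Σ i, Fin (n i)) m).elim 0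
    (fun e => (c e.1 : ∀ i, Fin (n i) → K) e.2.1 e.2.2)
  map_add' a b := by
    funext m
    rcases h : Encodable.decode (α := A × Σ i, Fin (n i)) m with _ | e <;> simp [h]
  map_smul' r a := by
    funext m
    rcases h : Encodable.decode (α := A × Σ i, Fin (n i)) m with _ | e <;> simp [h]

theorem packFn_encode (c : A → ↥(invLim K (fun i => Fin (n i) → K) q))
    (e : A × Σ i, Fin (n i)) :
    packFn K n q A c (Encodable.encode e) = (c e.1 : ∀ i, Fin (n i) → K) e.2.1 e.2.2 := by
  show (Encodable.decode (α := A × Σ i, Fin (n i)) (Encodable.encode e)).elim 0 _ = _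
  rw [Encodable.encodek]
  rfl

theorem packFn_continuous : Continuous ⇑(packFn K n q A) := by
  refine continuous_pi fun m => ?_
  rcases h : Encodable.decode (α := A × Σ i, Fin (n i)) m with _ | e
  · have : (fun c : A → ↥(invLim K (fun i => Fin (n i) → K) q) => packFn K n q A c m)
        = fun _ => 0 := by
      funext c
      show (Encodable.decode (α := A × Σ i, Fin (n i)) m).elim 0 _ = 0
      rw [h]
      rfl
    rw [this]; exact continuous_const
  · have : (fun c : A → ↥(invLim K (fun i => Fin (n i) → K) q) => packFn K n q A c m)
        = fun c => (c e.1 : ∀ i, Fin (n i) → K) e.2.1 e.2.2 := by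
      funext c
      show (Encodable.decode (α := A × Σ i, Fin (n i)) m).elim 0 _ = _
      rw [h]
      rfl
    rw [this]
    exact (continuous_apply _).comp ((continuous_apply _).comp
      (continuous_subtype_val.comp (continuous_apply _)))

theorem jmap_inducing :
    IsInducing (fun (c : A → ↥(invLim K (fun i => Fin (n i) → K) q)) (a : A) =>
      ((c a : ∀ i, Fin (n i) → K))) := by
  constructor
  simp only [Pi.topologicalSpace, instTopologicalSpaceSubtype, induced_iInf, induced_compose]
  rfl

theorem packFn_inducing : IsInducing ⇑(packFn K n q A) := by
  have hg : Continuous (fun (w : ℕ → K) (a : A) (i : ℕ) (t : Fin (n i)) =>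
      w (Encodable.encode (⟨a, ⟨i, t⟩⟩ : A × Σ i, Fin (n i)))) :=
    continuous_pi fun a => continuous_pi fun i => continuous_pi fun t => continuous_apply _
  have hcomp : (fun (w : ℕ → K) (a : A) (i : ℕ) (t : Fin (n i)) =>
        w (Encodable.encode (⟨a, ⟨i, t⟩⟩ : A × Σ i, Fin (n i)))) ∘ ⇑(packFn K n q A)
      = fun c a => ((c a : ∀ i, Fin (n i) → K)) := by
    funext c a
    funext i t
    exact packFn_encode K n q A c ⟨a, ⟨i, t⟩⟩
  exact IsInducing.of_comp (packFn_continuous K n q A) hg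
    (hcomp ▸ jmap_inducing K n q A)

theorem packFn_injective : Function.Injective ⇑(packFn K n q A) := by
  intro c c' h
  funext a
  apply Subtype.ext
  funext i t
  have := congrArg (fun w : ℕ → K =>
    w (Encodable.encode (⟨a, ⟨i, t⟩⟩ : A × Σ i, Fin (n i)))) h
  simpa only [packFn_encode] using this

theorem packFn_closed_range (hq : ∀ i, Continuous (q i)) :
    IsClosed (Set.range ⇑(packFn K n q A)) := by
  have hdesc : Set.range ⇑(packFn K n q A) =
      {w : ℕ → K | ∀ m, w m = (Encodable.decode (α := A × Σ i, Fin (n i)) m).elim 0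
          (fun e => w (Encodable.encode e))} ∩
      {w : ℕ → K | ∀ (a : A) (i : ℕ) (t : Fin (n i)),
          q i (fun u => w (Encodable.encode (⟨a, ⟨i+1, u⟩⟩ : A × Σ i, Fin (n i)))) t
            = w (Encodable.encode (⟨a, ⟨i, t⟩⟩ : A × Σ i, Fin (n i)))} := by
    ext w
    constructor
    · rintro ⟨c, rfl⟩
      constructor
      · intro m
        show (Encodable.decode (α := A × Σ i, Fin (n i)) m).elim 0 _ = _
        rcases h : Encodable.decode (α := A × Σ i, Fin (n i)) m with _ | e
        · rfl
        · simp only [Option.elim, packFn_encode]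
      · intro a i t
        have hmem := (c a).2 i
        have h1 : (fun u => packFn K n q A c
            (Encodable.encode (⟨a, ⟨i+1, u⟩⟩ : A × Σ i, Fin (n i))))
            = (c a : ∀ i, Fin (n i) → K) (i+1) := by
          funext u
          exact packFn_encode K n q A c ⟨a, ⟨i+1, u⟩⟩
        rw [h1, packFn_encode, hmem]
    · rintro ⟨h1, h2⟩
      refine ⟨fun a => ⟨fun i t => w (Encodable.encode (⟨a, ⟨i, t⟩⟩ : A × Σ i, Fin (n i))),
        fun i => funext fun t => h2 a i t⟩, ?_⟩
      funext m
      show (Encodable.decode (α := A × Σ i, Fin (n i)) m).elim 0 _ = w m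
      rw [h1 m]
  rw [hdesc]
  refine IsClosed.inter ?_ ?_
  · have : {w : ℕ → K | ∀ m, w m = (Encodable.decode (α := A × Σ i, Fin (n i)) m).elim 0
        (fun e => w (Encodable.encode e))} = ⋂ m, {w : ℕ → K |
          w m = (Encodable.decode (α := A × Σ i, Fin (n i)) m).elim 0
            (fun e => w (Encodable.encode e))} := by
      ext w; simp [Set.mem_iInter]
    rw [this]
    refine isClosed_iInter fun m => ?_
    rcases h : Encodable.decode (α := A × Σ i, Fin (n i)) m with _ | e
    · show IsClosed {w : ℕ → K | w m = (0 : K)}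
      exact isClosed_eq (continuous_apply m) continuous_const
    · show IsClosed {w : ℕ → K | w m = w (Encodable.encode e)}
      exact isClosed_eq (continuous_apply m) (continuous_apply _)
  · have : {w : ℕ → K | ∀ (a : A) (i : ℕ) (t : Fin (n i)),
        q i (fun u => w (Encodable.encode (⟨a, ⟨i+1, u⟩⟩ : A × Σ i, Fin (n i)))) t
          = w (Encodable.encode (⟨a, ⟨i, t⟩⟩ : A × Σ i, Fin (n i)))}
        = ⋂ (a : A), ⋂ (i : ℕ), ⋂ (t : Fin (n i)), {w : ℕ → K |
          q i (fun u => w (Encodable.encode (⟨a, ⟨i+1, u⟩⟩ : A × Σ i, Fin (n i)))) t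
            = w (Encodable.encode (⟨a, ⟨i, t⟩⟩ : A × Σ i, Fin (n i)))} := by
      ext w; simp [Set.mem_iInter]
    rw [this]
    refine isClosed_iInter fun a => isClosed_iInter fun i => isClosed_iInter fun t => ?_
    refine isClosed_eq ?_ (continuous_apply _)
    exact (continuous_apply t).comp ((hq i).comp
      (continuous_pi fun u => continuous_apply _))

end Pack

/-- The coboundary as a linear map. -/
def cochainDL {K G V : Type} [Field K] [Group G] [AddCommGroup V] [Module K V]
    (π : Representation K G V) (p : ℕ) :
    ((Fin p → G) → V) →ₗ[K] ((Fin (p + 1) → G) → V) where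
  toFun := cochainD π p
  map_add' a b := by
    funext g
    simp only [cochainD, Pi.add_apply, map_add, smul_add, Finset.sum_add_distrib]
    abel
  map_smul' c a := by
    funext g
    simp only [cochainD, Pi.smul_apply, map_smul, RingHom.id_apply, smul_add,
      Finset.smul_sum, smul_comm ((-1 : ℤ) ^ (p + 1)) c]
    congr 1
    · congr 1
      refine Finset.sum_congr rfl fun i _ => ?_
      rw [smul_comm]

theorem cochainDL_continuous {K G : Type} [Field K] [TopologicalSpace K]
    [IsTopologicalRing K] [Group G] {W : Type} [AddCommGroup W] [Module K W]
    [TopologicalSpace W] [IsTopologicalAddGroup W]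
    (π : Representation K G W) (hπ : ∀ g, Continuous (π g)) (p : ℕ) :
    Continuous ⇑(cochainDL π p) := by
  refine continuous_pi fun g => ?_
  show Continuous fun c : (Fin p → G) → W => cochainD π p c g
  unfold cochainD
  refine Continuous.add (Continuous.add ?_ ?_) ?_
  · exact (hπ (g 0)).comp (continuous_apply _)
  · exact continuous_finset_sum _ fun i _ =>
      (continuous_zsmul _).comp (continuous_apply _)
  · exact (continuous_zsmul _).comp (continuous_apply _)

/-- For a countable discrete group `G`, a topological field `K`, and a
pro-finite-dimensional `K`-vector space `V` with a continuous `K`-linear `G`-action,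
the coboundary group `B^{p+1}(G,V) = d(C^p(G,V))` is closed in the cochain space
`C^{p+1}(G,V)` (hence `B^p` is closed in `Z^p(G,V)`) for all `p ≥ 0`. -/
theorem stmt12 (K : Type) [Field K] [TopologicalSpace K] [IsTopologicalDivisionRing K]
    [T2Space K]
    (G : Type) [Group G] [Countable G]
    (n : ℕ → ℕ) (q : ∀ i, (Fin (n (i + 1)) → K) →ₗ[K] (Fin (n i) → K))
    (hq : ∀ i, Continuous (q i))
    (π : Representation K G ↥(invLim K (fun i => Fin (n i) → K) q))
    (hπ : ∀ g, Continuous (π g)) (p : ℕ) :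
    IsClosed (Set.range (cochainD π p) :
      Set ((Fin (p + 1) → G) → ↥(invLim K (fun i => Fin (n i) → K) q))) := by
  classical
  haveI : Encodable ((Fin p → G) × Σ i, Fin (n i)) := Encodable.ofCountable _
  haveI : Encodable ((Fin (p + 1) → G) × Σ i, Fin (n i)) := Encodable.ofCountable _
  set μ := packFn K n q (Fin p → G) with hμdef
  set μ' := packFn K n q (Fin (p + 1) → G) with hμ'def
  have hμinj := packFn_injective K n q (Fin p → G)
  have hμ'inj := packFn_injective K n q (Fin (p + 1) → G)
  set X : Submodule K (ℕ → K) := LinearMap.range μ with hXdef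
  have hX : IsClosed (X : Set (ℕ → K)) := by
    rw [hXdef, LinearMap.coe_range]
    exact packFn_closed_range K n q _ hq
  let e := LinearEquiv.ofInjective μ hμinj
  have hesymm_cont : Continuous ⇑e.symm := by
    rw [(packFn_inducing K n q (Fin p → G)).continuous_iff]
    have hval : ⇑μ ∘ ⇑e.symm = (Subtype.val : ↥X → (ℕ → K)) := by
      funext x
      show μ (e.symm x) = (x : ℕ → K)
      have h1 : (e (e.symm x) : ℕ → K) = μ (e.symm x) :=
        LinearEquiv.ofInjective_apply μ (e.symm x)
      rw [← h1, e.apply_symm_apply]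
    rw [hval]
    exact continuous_subtype_val
  let D := cochainDL π p
  have hDcont : Continuous ⇑D := cochainDL_continuous π hπ p
  let F : ↥X →ₗ[K] (ℕ → K) := μ'.comp (D.comp (e.symm : ↥X ≃ₗ[K] _).toLinearMap)
  have hFcont : Continuous ⇑F := by
    have : ⇑F = ⇑μ' ∘ ⇑D ∘ ⇑e.symm := rfl
    rw [this]
    exact (packFn_continuous K n q _).comp (hDcont.comp hesymm_cont)
  have hclosed := core_closed_range X hX F hFcont
  have hrange : Set.range ⇑F = ⇑μ' '' Set.range (cochainD π p) := by
    ext w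
    constructor
    · rintro ⟨x, rfl⟩
      exact ⟨D (e.symm x), ⟨e.symm x, rfl⟩, rfl⟩
    · rintro ⟨v, ⟨c, rfl⟩, rfl⟩
      refine ⟨e c, ?_⟩
      show μ' (D (e.symm (e c))) = μ' (cochainD π p c)
      rw [e.symm_apply_apply]
      rfl
  have hpre : Set.range (cochainD π p) = ⇑μ' ⁻¹' (Set.range ⇑F) := by
    rw [hrange, Set.preimage_image_eq _ hμ'inj]
  rw [hpre]
  exact hclosed.preimage (packFn_continuous K n q _)
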